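/- For every integer n ≥ 3 and every ζ ∈ ℂ with 0 < |ζ| < 1, there exists a unitary matrix U = (u_{ij}) ∈ U(n) such that u_{kj} = 0 for 2 ≤ j ≤ k−1, 3 ≤ k ≤ n, and u₂₂ = u₃₃ = ⋯ = u_{nn} = ζ. -/

import Mathlib

open Matrix

/-- The defect `√(1-|ζ|²)` as a complex number. -/
noncomputable def rtw (ζ : ℂ) : ℂ := (Real.sqrt (1 - ‖ζ‖ ^ 2) : ℝ)

lemma conj_rtw (ζ : ℂ) : (starRingEnd ℂ) (rtw ζ) = rtw ζ := Complex.conj_ofReal _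

lemma rtw_sq (ζ : ℂ) (hζ : ‖ζ‖ ≤ 1) :
    rtw ζ * rtw ζ = 1 - ζ * (starRingEnd ℂ) ζ := by
  have h0 : (0:ℝ) ≤ 1 - ‖ζ‖ ^ 2 := by nlinarith [norm_nonneg ζ]
  rw [Complex.mul_conj]
  unfold rtw
  rw [← Complex.ofReal_mul, Real.mul_self_sqrt h0, ← Complex.sq_norm]
  push_cast
  ring

/-- Rotation in the `(0,k)` plane with entries `[-conj ζ, w; w, ζ]`. -/
noncomputable def rot (n : ℕ) [NeZero n] (ζ : ℂ) (k : Fin n) : Matrix (Fin n) (Fin n) ℂ :=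
  Matrix.of fun i j =>
    if i = 0 then (if j = 0 then -(starRingEnd ℂ) ζ else if j = k then rtw ζ else 0)
    else if i = k then (if j = 0 then rtw ζ else if j = k then ζ else 0)
    else if i = j then 1 else 0

section rotLemmas

variable {n : ℕ} [NeZero n] {ζ : ℂ} {k : Fin n}

lemma rot_row_zero (j : Fin n) :
    rot n ζ k 0 j = if j = 0 then -(starRingEnd ℂ) ζ else if j = k then rtw ζ else 0 := by
  simp [rot]

lemma rot_row_k (hk : k ≠ 0) (j : Fin n) :
    rot n ζ k k j = if j = 0 then rtw ζ else if j = k then ζ else 0 := by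
  simp [rot, hk]

lemma rot_row_other {a : Fin n} (ha0 : a ≠ 0) (hak : a ≠ k) (j : Fin n) :
    rot n ζ k a j = if a = j then 1 else 0 := by
  simp [rot, ha0, hak]

lemma rot_col_zero (hk : k ≠ 0) (l : Fin n) :
    rot n ζ k l 0 = if l = 0 then -(starRingEnd ℂ) ζ else if l = k then rtw ζ else 0 := by
  simp only [rot, Matrix.of_apply]
  split_ifs <;> simp_all

lemma rot_col_k (hk : k ≠ 0) (l : Fin n) :
    rot n ζ k l k = if l = 0 then rtw ζ else if l = k then ζ else 0 := by
  simp only [rot, Matrix.of_apply]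
  split_ifs <;> simp_all

lemma rot_col_other {j : Fin n} (hj0 : j ≠ 0) (hjk : j ≠ k) (l : Fin n) :
    rot n ζ k l j = if l = j then 1 else 0 := by
  simp only [rot, Matrix.of_apply]
  split_ifs <;> simp_all

end rotLemmas

/-- Sum over a function supported on two points. -/
lemma sum_eq_pair {n : ℕ} (f : Fin n → ℂ) (a b : Fin n) (hab : a ≠ b)
    (h0 : ∀ c, c ≠ a → c ≠ b → f c = 0) : ∑ c, f c = f a + f b := by
  rw [← Finset.sum_pair hab]
  refine (Finset.sum_subset (Finset.subset_univ _) ?_).symm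
  intro x _ hx
  simp only [Finset.mem_insert, Finset.mem_singleton, not_or] at hx
  exact h0 x hx.1 hx.2

/-- Sum over a function supported on one point. -/
lemma sum_eq_pt {n : ℕ} (f : Fin n → ℂ) (a : Fin n)
    (h0 : ∀ c, c ≠ a → f c = 0) : ∑ c, f c = f a :=
  Fintype.sum_eq_single a h0

theorem rot_mem (n : ℕ) [NeZero n] (ζ : ℂ) (hζ : ‖ζ‖ ≤ 1) (k : Fin n)
    (hk : k ≠ 0) : rot n ζ k ∈ Matrix.unitaryGroup (Fin n) ℂ := by
  have e00 : rot n ζ k 0 0 = -(starRingEnd ℂ) ζ := by rw [rot_row_zero, if_pos rfl]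
  have e0k : rot n ζ k 0 k = rtw ζ := by rw [rot_row_zero, if_neg hk, if_pos rfl]
  have ek0 : rot n ζ k k 0 = rtw ζ := by rw [rot_row_k hk, if_pos rfl]
  have ekk : rot n ζ k k k = ζ := by rw [rot_row_k hk, if_neg hk, if_pos rfl]
  have e0b : ∀ b : Fin n, b ≠ 0 → b ≠ k → rot n ζ k 0 b = 0 := fun b hb0 hbk => by
    rw [rot_row_zero, if_neg hb0, if_neg hbk]
  have ekb : ∀ b : Fin n, b ≠ 0 → b ≠ k → rot n ζ k k b = 0 := fun b hb0 hbk => by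
    rw [rot_row_k hk, if_neg hb0, if_neg hbk]
  have eg0 : ∀ b : Fin n, b ≠ 0 → b ≠ k → rot n ζ k b 0 = 0 := fun b hb0 hbk => by
    rw [rot_row_other hb0 hbk, if_neg hb0]
  have egk : ∀ b : Fin n, b ≠ 0 → b ≠ k → rot n ζ k b k = 0 := fun b hb0 hbk => by
    rw [rot_row_other hb0 hbk, if_neg hbk]
  have hsq := rtw_sq ζ hζ
  rw [Matrix.mem_unitaryGroup_iff]
  ext a b
  rw [Matrix.mul_apply, Matrix.one_apply]
  simp only [Matrix.star_apply]
  rcases eq_or_ne a 0 with rfl | ha0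
  · rw [sum_eq_pair _ 0 k (Ne.symm hk)
      (fun c hc0 hck => by rw [rot_row_zero, if_neg hc0, if_neg hck, zero_mul])]
    rcases eq_or_ne b 0 with rfl | hb0
    · rw [e00, e0k, if_pos rfl]
      simp only [Complex.star_def, map_neg, Complex.conj_conj, conj_rtw]
      linear_combination hsq
    · rcases eq_or_ne b k with hbk | hbk
      · rw [hbk, e00, e0k, ek0, ekk, if_neg (Ne.symm hk)]
        simp only [Complex.star_def, conj_rtw]
        ring
      · rw [e00, e0k, eg0 b hb0 hbk, egk b hb0 hbk, if_neg (Ne.symm hb0)]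
        simp
  · rcases eq_or_ne a k with hak | hak
    · rw [hak]
      rw [sum_eq_pair _ 0 k (Ne.symm hk)
        (fun c hc0 hck => by rw [rot_row_k hk, if_neg hc0, if_neg hck, zero_mul])]
      rcases eq_or_ne b 0 with rfl | hb0
      · rw [e00, e0k, ek0, ekk, if_neg hk]
        simp only [Complex.star_def, map_neg, Complex.conj_conj, conj_rtw]
        ring
      · rcases eq_or_ne b k with hbk | hbk
        · rw [hbk, ek0, ekk, if_pos rfl]
          simp only [Complex.star_def, conj_rtw]
          linear_combination hsq
        · rw [ek0, ekk, eg0 b hb0 hbk, egk b hb0 hbk, if_neg (Ne.symm hbk)]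
          simp
    · rw [sum_eq_pt _ a
        (fun c hc => by rw [rot_row_other ha0 hak, if_neg (Ne.symm hc), zero_mul])]
      rw [rot_row_other ha0 hak, if_pos rfl, one_mul]
      rcases eq_or_ne b 0 with rfl | hb0
      · rw [e0b a ha0 hak, if_neg ha0]
        simp
      · rcases eq_or_ne b k with hbk | hbk
        · rw [hbk, ekb a ha0 hak, if_neg hak]
          simp
        · rw [rot_row_other hb0 hbk]
          rcases eq_or_ne a b with rfl | hab
          · simp
          · rw [if_neg (Ne.symm hab), if_neg hab]
            simp

/-- Partial products of the rotations `rot 1 * rot 2 * ⋯ * rot m`. -/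
noncomputable def prodRot (n : ℕ) [NeZero n] (ζ : ℂ) : ℕ → Matrix (Fin n) (Fin n) ℂ
  | 0 => 1
  | m + 1 => if h : m + 1 < n then prodRot n ζ m * rot n ζ ⟨m + 1, h⟩ else prodRot n ζ m

section prodLemmas

variable {n : ℕ} [NeZero n] {ζ : ℂ}

lemma mkk_ne_zero {m : ℕ} (h : m + 1 < n) : (⟨m + 1, h⟩ : Fin n) ≠ 0 := by
  intro hh
  have := congrArg Fin.val hh
  simp at this

theorem prodRot_mem (hζ : ‖ζ‖ ≤ 1) (m : ℕ) :
    prodRot n ζ m ∈ Matrix.unitaryGroup (Fin n) ℂ := by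
  induction m with
  | zero => exact one_mem _
  | succ m ih =>
    rw [prodRot]
    by_cases h : m + 1 < n
    · rw [dif_pos h]
      exact mul_mem ih (rot_mem n ζ hζ ⟨m + 1, h⟩ (mkk_ne_zero h))
    · rw [dif_neg h]
      exact ih

theorem prodRot_col_id (m : ℕ) (i j : Fin n) (hj : m < (j : ℕ)) :
    prodRot n ζ m i j = if i = j then 1 else 0 := by
  induction m generalizing i j with
  | zero => rw [prodRot, Matrix.one_apply]
  | succ m ih =>
    rw [prodRot]
    by_cases h : m + 1 < n
    · rw [dif_pos h]
      set k : Fin n := ⟨m + 1, h⟩ with hkdef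
      have hj0 : j ≠ 0 := by
        intro hh; have := congrArg Fin.val hh; simp only [Fin.val_zero] at this; omega
      have hjk : j ≠ k := by
        intro hh; have := congrArg Fin.val hh; rw [hkdef] at this; simp at this; omega
      have hrjj : rot n ζ k j j = 1 := by rw [rot_col_other hj0 hjk, if_pos rfl]
      rw [Matrix.mul_apply,
        sum_eq_pt _ j (fun c hc => by
          rw [rot_col_other hj0 hjk, if_neg hc, mul_zero]),
        hrjj, mul_one]
      exact ih i j (by omega)
    · rw [dif_neg h]
      exact ih i j (by omega)

theorem prodRot_col_zero (m : ℕ) (i : Fin n) (hi : m < (i : ℕ)) :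
    prodRot n ζ m i 0 = 0 := by
  induction m generalizing i with
  | zero =>
    rw [prodRot, Matrix.one_apply, if_neg]
    intro hh; have := congrArg Fin.val hh; simp only [Fin.val_zero] at this; omega
  | succ m ih =>
    rw [prodRot]
    by_cases h : m + 1 < n
    · rw [dif_pos h]
      set k : Fin n := ⟨m + 1, h⟩ with hkdef
      have hk : k ≠ 0 := mkk_ne_zero h
      have hkv : (k : ℕ) = m + 1 := by rw [hkdef]
      have e0 : rot n ζ k (0 : Fin n) 0 = -(starRingEnd ℂ) ζ := by
        rw [rot_col_zero hk, if_pos rfl]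
      have ek : rot n ζ k k 0 = rtw ζ := by
        rw [rot_col_zero hk, if_neg hk, if_pos rfl]
      rw [Matrix.mul_apply,
        sum_eq_pair _ 0 k (Ne.symm hk) (fun c hc0 hck => by
          rw [rot_col_zero hk, if_neg hc0, if_neg hck, mul_zero]),
        e0, ek]
      have h1 : prodRot n ζ m i 0 = 0 := ih i (by omega)
      have h2 : prodRot n ζ m i k = 0 := by
        rw [prodRot_col_id m i k (by omega), if_neg]
        intro hh; have := congrArg Fin.val hh; rw [hkv] at this; omega
      rw [h1, h2, zero_mul, zero_mul, add_zero]
    · rw [dif_neg h]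
      exact ih i (by omega)

theorem prodRot_tri (m : ℕ) (i j : Fin n) (hj1 : 1 ≤ (j : ℕ)) (hjm : (j : ℕ) ≤ m) :
    (i = j → prodRot n ζ m i j = ζ) ∧ ((j : ℕ) < (i : ℕ) → prodRot n ζ m i j = 0) := by
  induction m generalizing i j with
  | zero => omega
  | succ m ih =>
    rw [prodRot]
    by_cases h : m + 1 < n
    · rw [dif_pos h]
      set k : Fin n := ⟨m + 1, h⟩ with hkdef
      have hk : k ≠ 0 := mkk_ne_zero h
      have hkv : (k : ℕ) = m + 1 := by rw [hkdef]
      have hj0 : j ≠ 0 := by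
        intro hh; have := congrArg Fin.val hh; simp only [Fin.val_zero] at this; omega
      rcases eq_or_ne j k with hjk | hjk
      · have hjv : (j : ℕ) = m + 1 := by rw [hjk, hkv]
        have e0 : rot n ζ k (0 : Fin n) k = rtw ζ := by
          rw [rot_col_k hk, if_pos rfl]
        have ek : rot n ζ k k k = ζ := by
          rw [rot_col_k hk, if_neg hk, if_pos rfl]
        rw [hjk, Matrix.mul_apply,
          sum_eq_pair _ 0 k (Ne.symm hk) (fun c hc0 hck => by
            rw [rot_col_k hk, if_neg hc0, if_neg hck, mul_zero]),
          e0, ek]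
        constructor
        · intro hij
          have hiv : (i : ℕ) = m + 1 := by rw [hij, hkv]
          rw [prodRot_col_zero m i (by omega),
            prodRot_col_id m i k (by omega), if_pos hij]
          ring
        · intro hij
          have hii : m + 1 < (i : ℕ) := by omega
          rw [prodRot_col_zero m i (by omega),
            prodRot_col_id m i k (by omega), if_neg (by
              intro hh; have := congrArg Fin.val hh; omega)]
          ring
      · have hjm' : (j : ℕ) ≤ m := by
          rcases Nat.lt_or_ge (j : ℕ) (m + 1) with h' | h'
          · omega
          · exfalso; exact hjk (Fin.ext (by omega))
        have hrjj : rot n ζ k j j = 1 := by rw [rot_col_other hj0 hjk, if_pos rfl]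
        rw [Matrix.mul_apply,
          sum_eq_pt _ j (fun c hc => by
            rw [rot_col_other hj0 hjk, if_neg hc, mul_zero]),
          hrjj, mul_one]
        exact ih i j hj1 hjm'
    · rw [dif_neg h]
      exact ih i j hj1 (by
        have : (j : ℕ) < n := j.isLt
        omega)

end prodLemmas

/-- For `n ≥ 3` and `ζ` with `0 < |ζ| < 1` there exists a unitary matrix
whose lower-right `(n-1)×(n-1)` block is upper triangular with all diagonal entries
equal to `ζ`. -/
theorem stmt_5 (n : ℕ) (hn : 3 ≤ n) (ζ : ℂ)
    (h0 : 0 < ‖ζ‖) (h1 : ‖ζ‖ < 1) :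
    ∃ U : Matrix (Fin n) (Fin n) ℂ, U ∈ Matrix.unitaryGroup (Fin n) ℂ ∧
      (∀ k j : Fin n, 1 ≤ (j : ℕ) → (j : ℕ) < (k : ℕ) → U k j = 0) ∧
      (∀ l : Fin n, 1 ≤ (l : ℕ) → U l l = ζ) := by
  haveI : NeZero n := ⟨by omega⟩
  refine ⟨prodRot n ζ (n - 1), prodRot_mem h1.le (n - 1), ?_, ?_⟩
  · intro k j hj1 hjk
    exact (prodRot_tri (n - 1) k j hj1 (by have := k.isLt; omega)).2 hjk
  · intro l hl
    exact (prodRot_tri (n - 1) l l hl (by have := l.isLt; omega)).1 rfl
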